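/- arXiv:1710.04136 — 2 statements merged into one kernel-verified Lean document; each statement's English description precedes it below -/
import Mathlib

section
/- For the quartic polynomial H̄(I_1,I_2,I_3,I_4) given by the four-particle KG normal form (with frequencies √(a+2), √(a+4), √(a+2), √a and quartic part (b/8)[3(I_1²+I_3²)/(4(a+2)) + 3I_2²/(8(a+4)) + 3I_4²/(8a) + 3I_2(I_1+I_3)/√(2(a+2)(a+4)) + 3I_4(I_1+I_3)/√(2a(a+2)) + 3I_2I_4/√(2a(a+4))]), the determinant of its 4×4 Hessian in (I_1,...,I_4) is nonzero whenever a > 0 and b ≠ 0. -/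
/-- Partial derivative of `f : ℝ^n → ℝ` in the `i`-th coordinate direction. -/
noncomputable def pd {n : ℕ} (f : (Fin n → ℝ) → ℝ) (i : Fin n) : (Fin n → ℝ) → ℝ :=
  fun x => fderiv ℝ f x (Pi.single i 1)


lemma my_det_fin_four (M : Matrix (Fin 4) (Fin 4) ℝ) : M.det =
      M 0 0 * M 1 1 * M 2 2 * M 3 3
      - M 0 0 * M 1 1 * M 2 3 * M 3 2
      - M 0 0 * M 1 2 * M 2 1 * M 3 3
      + M 0 0 * M 1 2 * M 2 3 * M 3 1
      + M 0 0 * M 1 3 * M 2 1 * M 3 2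
      - M 0 0 * M 1 3 * M 2 2 * M 3 1
      - M 0 1 * M 1 0 * M 2 2 * M 3 3
      + M 0 1 * M 1 0 * M 2 3 * M 3 2
      + M 0 1 * M 1 2 * M 2 0 * M 3 3
      - M 0 1 * M 1 2 * M 2 3 * M 3 0
      - M 0 1 * M 1 3 * M 2 0 * M 3 2
      + M 0 1 * M 1 3 * M 2 2 * M 3 0
      + M 0 2 * M 1 0 * M 2 1 * M 3 3
      - M 0 2 * M 1 0 * M 2 3 * M 3 1
      - M 0 2 * M 1 1 * M 2 0 * M 3 3
      + M 0 2 * M 1 1 * M 2 3 * M 3 0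
      + M 0 2 * M 1 3 * M 2 0 * M 3 1
      - M 0 2 * M 1 3 * M 2 1 * M 3 0
      - M 0 3 * M 1 0 * M 2 1 * M 3 2
      + M 0 3 * M 1 0 * M 2 2 * M 3 1
      + M 0 3 * M 1 1 * M 2 0 * M 3 2
      - M 0 3 * M 1 1 * M 2 2 * M 3 0
      - M 0 3 * M 1 2 * M 2 0 * M 3 1
      + M 0 3 * M 1 2 * M 2 1 * M 3 0 := by
  rw [Matrix.det_succ_row_zero]
  simp [Fin.sum_univ_succ, Matrix.det_fin_three, Fin.succAbove,
    show (Fin.succ 2 : Fin 4) = 3 from rfl, show (Fin.castSucc 2 : Fin 4) = 2 from rfl,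
    show ((1 : Fin 4) < 3) = True from by decide]
  ring

lemma of_mat_apply {m n : Type*} (M : Matrix m n ℝ) (i : m) (j : n) : Matrix.of M i j = M i j := rfl

lemma aux32 (u : ℝ) (hu2 : u^2 = 2) (hup : 0 < u) : 0 < 32*u - 23 := by nlinarith

set_option maxHeartbeats 2000000 in
lemma hess_det_ne (a b u s0 s2 s4 : ℝ) (ha : 0 < a) (hb : b ≠ 0)
    (hu2 : u^2 = 2) (hs02 : s0^2 = a) (hs22 : s2^2 = a+2) (hs42 : s4^2 = a+4)
    (hup : 0 < u) (h0p : 0 < s0) (h2p : 0 < s2) (h4p : 0 < s4) :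
    (Matrix.of !![3*b/(16*(a+2)), 3*b*(u*s2*s4)/(16*((a+2)*(a+4))), 0, 3*b*(u*s0*s2)/(16*(a*(a+2)));
        3*b*(u*s2*s4)/(16*((a+2)*(a+4))), 3*b/(32*(a+4)), 3*b*(u*s2*s4)/(16*((a+2)*(a+4))), 3*b*(u*s0*s4)/(16*(a*(a+4)));
        0, 3*b*(u*s2*s4)/(16*((a+2)*(a+4))), 3*b/(16*(a+2)), 3*b*(u*s0*s2)/(16*(a*(a+2)));
        3*b*(u*s0*s2)/(16*(a*(a+2))), 3*b*(u*s0*s4)/(16*(a*(a+4))), 3*b*(u*s0*s2)/(16*(a*(a+2))), 3*b/(32*a)]).det ≠ 0 := by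
  have ha2 : (0:ℝ) < a + 2 := by linarith
  have ha4 : (0:ℝ) < a + 4 := by linarith
  have hD : (32*(a*(a+2)^2*(a+4)) : ℝ) ≠ 0 := by positivity
  have f00 : 3*b/(16*(a+2)) = (6*a*b*(a+2)*(a+4))/(32*(a*(a+2)^2*(a+4))) := by
    rw [div_eq_div_iff (by positivity : ((_:ℝ)) ≠ 0) hD]; ring
  have f01 : 3*b*(u*s2*s4)/(16*((a+2)*(a+4))) = (6*a*b*(a+2)*(u*s2*s4))/(32*(a*(a+2)^2*(a+4))) := by
    rw [div_eq_div_iff (by positivity : ((_:ℝ)) ≠ 0) hD]; ring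
  have f03 : 3*b*(u*s0*s2)/(16*(a*(a+2))) = (6*b*(a+2)*(a+4)*(u*s0*s2))/(32*(a*(a+2)^2*(a+4))) := by
    rw [div_eq_div_iff (by positivity : ((_:ℝ)) ≠ 0) hD]; ring
  have f13 : 3*b*(u*s0*s4)/(16*(a*(a+4))) = (6*b*(a+2)^2*(u*s0*s4))/(32*(a*(a+2)^2*(a+4))) := by
    rw [div_eq_div_iff (by positivity : ((_:ℝ)) ≠ 0) hD]; ring
  have f11 : 3*b/(32*(a+4)) = (3*a*b*(a+2)^2)/(32*(a*(a+2)^2*(a+4))) := by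
    rw [div_eq_div_iff (by positivity : ((_:ℝ)) ≠ 0) hD]; ring
  have f33 : 3*b/(32*a) = (3*b*(a+2)^2*(a+4))/(32*(a*(a+2)^2*(a+4))) := by
    rw [div_eq_div_iff (by positivity : ((_:ℝ)) ≠ 0) hD]; ring
  have pu3 : u^3 = 2^1*u := by linear_combination (2^0*u^1)*hu2
  have pu4 : u^4 = 2^2 := by linear_combination (2^0*u^2+2^1*u^0)*hu2
  have pu5 : u^5 = 2^2*u := by linear_combination (2^0*u^3+2^1*u^1)*hu2
  have pu6 : u^6 = 2^3 := by linear_combination (2^0*u^4+2^1*u^2+2^2*u^0)*hu2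
  have pu7 : u^7 = 2^3*u := by linear_combination (2^0*u^5+2^1*u^3+2^2*u^1)*hu2
  have pu8 : u^8 = 2^4 := by linear_combination (2^0*u^6+2^1*u^4+2^2*u^2+2^3*u^0)*hu2
  have ps03 : s0^3 = a^1*s0 := by linear_combination (a^0*s0^1)*hs02
  have ps04 : s0^4 = a^2 := by linear_combination (a^0*s0^2+a^1*s0^0)*hs02
  have ps05 : s0^5 = a^2*s0 := by linear_combination (a^0*s0^3+a^1*s0^1)*hs02
  have ps06 : s0^6 = a^3 := by linear_combination (a^0*s0^4+a^1*s0^2+a^2*s0^0)*hs02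
  have ps07 : s0^7 = a^3*s0 := by linear_combination (a^0*s0^5+a^1*s0^3+a^2*s0^1)*hs02
  have ps08 : s0^8 = a^4 := by linear_combination (a^0*s0^6+a^1*s0^4+a^2*s0^2+a^3*s0^0)*hs02
  have ps23 : s2^3 = (a+2)^1*s2 := by linear_combination ((a+2)^0*s2^1)*hs22
  have ps24 : s2^4 = (a+2)^2 := by linear_combination ((a+2)^0*s2^2+(a+2)^1*s2^0)*hs22
  have ps25 : s2^5 = (a+2)^2*s2 := by linear_combination ((a+2)^0*s2^3+(a+2)^1*s2^1)*hs22
  have ps26 : s2^6 = (a+2)^3 := by linear_combination ((a+2)^0*s2^4+(a+2)^1*s2^2+(a+2)^2*s2^0)*hs22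
  have ps27 : s2^7 = (a+2)^3*s2 := by linear_combination ((a+2)^0*s2^5+(a+2)^1*s2^3+(a+2)^2*s2^1)*hs22
  have ps28 : s2^8 = (a+2)^4 := by linear_combination ((a+2)^0*s2^6+(a+2)^1*s2^4+(a+2)^2*s2^2+(a+2)^3*s2^0)*hs22
  have ps43 : s4^3 = (a+4)^1*s4 := by linear_combination ((a+4)^0*s4^1)*hs42
  have ps44 : s4^4 = (a+4)^2 := by linear_combination ((a+4)^0*s4^2+(a+4)^1*s4^0)*hs42
  have ps45 : s4^5 = (a+4)^2*s4 := by linear_combination ((a+4)^0*s4^3+(a+4)^1*s4^1)*hs42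
  have ps46 : s4^6 = (a+4)^3 := by linear_combination ((a+4)^0*s4^4+(a+4)^1*s4^2+(a+4)^2*s4^0)*hs42
  have ps47 : s4^7 = (a+4)^3*s4 := by linear_combination ((a+4)^0*s4^5+(a+4)^1*s4^3+(a+4)^2*s4^1)*hs42
  have ps48 : s4^8 = (a+4)^4 := by linear_combination ((a+4)^0*s4^6+(a+4)^1*s4^4+(a+4)^2*s4^2+(a+4)^3*s4^0)*hs42
  have hne : (81 * b^4 * (32*u - 23))/(262144*(a*(a+2)^2*(a+4))) ≠ 0 := by
    have hb4 : 0 < b^4 := by positivity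
    have h32 : 0 < 32*u - 23 := aux32 u hu2 hup
    have : 0 < (81 * b^4 * (32*u - 23))/(262144*(a*(a+2)^2*(a+4))) := by positivity
    exact this.ne'
  refine ne_of_eq_of_ne ?_ hne
  rw [my_det_fin_four]
  simp only [of_mat_apply, Matrix.of_apply, Matrix.cons_val', Matrix.cons_val_zero, Matrix.cons_val_one,
    Matrix.head_cons, Matrix.cons_val_two, Matrix.tail_cons, Matrix.cons_val_three,
    Matrix.empty_val', Matrix.cons_val_fin_one, Matrix.head_fin_const]
  rw [f00, f01, f03, f13, f11, f33]
  simp only [mul_zero, zero_mul, add_zero, zero_add, sub_zero, zero_sub,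
    div_mul_div_comm, ← add_div, div_sub_div_same]
  rw [div_eq_div_iff (by positivity) (by positivity)]
  ring_nf
  simp only [hu2, hs02, hs22, hs42, pu3, pu4, pu5, pu6, pu7, pu8, ps03, ps04, ps05, ps06, ps07, ps08, ps23, ps24, ps25, ps26, ps27, ps28, ps43, ps44, ps45, ps46, ps47, ps48]
  ring



lemma hasFDeriv_quad {n : ℕ} (c : ℝ) (p : Fin n → ℝ) (q : Fin n → Fin n → ℝ) (x : Fin n → ℝ) :
    HasFDerivAt (fun v : Fin n → ℝ => c + (∑ i, p i * v i) + (∑ i, ∑ j, q i j * (v i * v j)))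
      ((∑ i, p i • (ContinuousLinearMap.proj i : (Fin n → ℝ) →L[ℝ] ℝ))
        + ∑ i, ∑ j, q i j • (x i • (ContinuousLinearMap.proj j : (Fin n → ℝ) →L[ℝ] ℝ)
            + x j • (ContinuousLinearMap.proj i : (Fin n → ℝ) →L[ℝ] ℝ))) x := by
  have hv : ∀ i : Fin n, HasFDerivAt (fun v : Fin n → ℝ => v i)
      (ContinuousLinearMap.proj i : (Fin n → ℝ) →L[ℝ] ℝ) x :=
    fun i => hasFDerivAt_apply i x
  exact ((HasFDerivAt.fun_sum (fun i _ => (hv i).const_mul (p i))).const_add c).add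
    (HasFDerivAt.fun_sum fun i _ => HasFDerivAt.fun_sum fun j _ => ((hv i).mul (hv j)).const_mul (q i j))

lemma pd_quad {n : ℕ} (c : ℝ) (p : Fin n → ℝ) (q : Fin n → Fin n → ℝ) (k : Fin n) (x : Fin n → ℝ) :
    pd (fun v : Fin n → ℝ => c + (∑ i, p i * v i) + (∑ i, ∑ j, q i j * (v i * v j))) k x
      = p k + ((∑ i, q i k * x i) + (∑ j, q k j * x j)) := by
  rw [pd, (hasFDeriv_quad c p q x).fderiv]
  simp [ContinuousLinearMap.sum_apply, Pi.single_apply, mul_add, Finset.sum_add_distrib,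
    Finset.mul_sum, mul_comm]

noncomputable def pv (a : ℝ) : Fin 4 → ℝ :=
  ![Real.sqrt (a+2)/2, Real.sqrt (a+4)/2, Real.sqrt (a+2)/2, Real.sqrt a/2]

noncomputable def qm (a b : ℝ) : Fin 4 → Fin 4 → ℝ :=
  ![![3*b/(32*(a+2)), 3*b/(16*Real.sqrt (2*(a+2)*(a+4))), 0, 3*b/(16*Real.sqrt (2*a*(a+2)))],
    ![3*b/(16*Real.sqrt (2*(a+2)*(a+4))), 3*b/(64*(a+4)), 3*b/(16*Real.sqrt (2*(a+2)*(a+4))),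
      3*b/(16*Real.sqrt (2*a*(a+4)))],
    ![0, 3*b/(16*Real.sqrt (2*(a+2)*(a+4))), 3*b/(32*(a+2)), 3*b/(16*Real.sqrt (2*a*(a+2)))],
    ![3*b/(16*Real.sqrt (2*a*(a+2))), 3*b/(16*Real.sqrt (2*a*(a+4))), 3*b/(16*Real.sqrt (2*a*(a+2))),
      3*b/(64*a)]]

set_option maxHeartbeats 1600000 in
/-- For the four-particle KG normal form `H̄(I₁,I₂,I₃,I₄)` (variables `v 0, …, v 3`),
the determinant of the 4×4 Hessian is nonzero whenever `a > 0`, `b ≠ 0`. -/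
theorem stmt11 (a b : ℝ) (ha : 0 < a) (hb : b ≠ 0)
    (H : (Fin 4 → ℝ) → ℝ)
    (hH : ∀ v, H v = Real.sqrt (a + 2) / 2 * v 0 + Real.sqrt (a + 4) / 2 * v 1
      + Real.sqrt (a + 2) / 2 * v 2 + Real.sqrt a / 2 * v 3
      + b / 8 * (3 * ((v 0) ^ 2 + (v 2) ^ 2) / (4 * (a + 2))
        + 3 * (v 1) ^ 2 / (8 * (a + 4)) + 3 * (v 3) ^ 2 / (8 * a)
        + 3 * v 1 * (v 0 + v 2) / Real.sqrt (2 * (a + 2) * (a + 4))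
        + 3 * v 3 * (v 0 + v 2) / Real.sqrt (2 * a * (a + 2))
        + 3 * v 1 * v 3 / Real.sqrt (2 * a * (a + 4)))) :
    ∀ x : Fin 4 → ℝ, (Matrix.of fun i j => pd (pd H j) i x).det ≠ 0 := by
  intro x
  have ha2 : (0:ℝ) < a + 2 := by linarith
  have ha4 : (0:ℝ) < a + 4 := by linarith
  have hu2 : Real.sqrt 2 ^ 2 = 2 := Real.sq_sqrt (by norm_num)
  have hs02 : Real.sqrt a ^ 2 = a := Real.sq_sqrt ha.le
  have hs22 : Real.sqrt (a+2) ^ 2 = a+2 := Real.sq_sqrt ha2.le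
  have hs42 : Real.sqrt (a+4) ^ 2 = a+4 := Real.sq_sqrt ha4.le
  have hup : 0 < Real.sqrt 2 := Real.sqrt_pos.mpr (by norm_num)
  have h0p : 0 < Real.sqrt a := Real.sqrt_pos.mpr ha
  have h2p : 0 < Real.sqrt (a+2) := Real.sqrt_pos.mpr ha2
  have h4p : 0 < Real.sqrt (a+4) := Real.sqrt_pos.mpr ha4
  have hA : Real.sqrt (2*(a+2)*(a+4)) = Real.sqrt 2 * Real.sqrt (a+2) * Real.sqrt (a+4) := by
    rw [Real.sqrt_mul (by positivity), Real.sqrt_mul (by norm_num : (0:ℝ) ≤ 2)]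
  have hB : Real.sqrt (2*a*(a+2)) = Real.sqrt 2 * Real.sqrt a * Real.sqrt (a+2) := by
    rw [Real.sqrt_mul (by positivity), Real.sqrt_mul (by norm_num : (0:ℝ) ≤ 2)]
  have hC : Real.sqrt (2*a*(a+4)) = Real.sqrt 2 * Real.sqrt a * Real.sqrt (a+4) := by
    rw [Real.sqrt_mul (by positivity), Real.sqrt_mul (by norm_num : (0:ℝ) ≤ 2)]
  have g1 : 3*b/(16*Real.sqrt (2*(a+2)*(a+4))) + 3*b/(16*Real.sqrt (2*(a+2)*(a+4)))
      = 3*b*(Real.sqrt 2*Real.sqrt (a+2)*Real.sqrt (a+4))/(16*((a+2)*(a+4))) := by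
    rw [hA, ← add_div, div_eq_div_iff (by positivity) (by positivity)]
    linear_combination (-48*b*Real.sqrt (a+2)^2*Real.sqrt (a+4)^2)*hu2
      + (-96*b*Real.sqrt (a+4)^2)*hs22 + (-96*b*(a+2))*hs42
  have g2 : 3*b/(16*Real.sqrt (2*a*(a+2))) + 3*b/(16*Real.sqrt (2*a*(a+2)))
      = 3*b*(Real.sqrt 2*Real.sqrt a*Real.sqrt (a+2))/(16*(a*(a+2))) := by
    rw [hB, ← add_div, div_eq_div_iff (by positivity) (by positivity)]
    linear_combination (-48*b*Real.sqrt a^2*Real.sqrt (a+2)^2)*hu2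
      + (-96*b*Real.sqrt (a+2)^2)*hs02 + (-96*a*b)*hs22
  have g3 : 3*b/(16*Real.sqrt (2*a*(a+4))) + 3*b/(16*Real.sqrt (2*a*(a+4)))
      = 3*b*(Real.sqrt 2*Real.sqrt a*Real.sqrt (a+4))/(16*(a*(a+4))) := by
    rw [hC, ← add_div, div_eq_div_iff (by positivity) (by positivity)]
    linear_combination (-48*b*Real.sqrt a^2*Real.sqrt (a+4)^2)*hu2
      + (-96*b*Real.sqrt (a+4)^2)*hs02 + (-96*a*b)*hs42
  have hq : H = fun v => (0:ℝ) + (∑ i, pv a i * v i) + (∑ i, ∑ j, qm a b i j * (v i * v j)) := by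
    funext v
    rw [hH]
    simp only [pv, qm, Fin.sum_univ_four, Matrix.cons_val', Matrix.cons_val_zero,
      Matrix.cons_val_one, Matrix.head_cons, Matrix.cons_val_two, Matrix.tail_cons,
      Matrix.cons_val_three, Matrix.empty_val', Matrix.cons_val_fin_one, Matrix.head_fin_const]
    have hAne : Real.sqrt (2*(a+2)*(a+4)) ≠ 0 := by positivity
    have hBne : Real.sqrt (2*a*(a+2)) ≠ 0 := by positivity
    have hCne : Real.sqrt (2*a*(a+4)) ≠ 0 := by positivity
    field_simp
    ring
  have h1 : ∀ j, pd H j = fun y => (pv a j) + (∑ i, (qm a b i j + qm a b j i) * y i)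
      + (∑ i, ∑ l, (0:ℝ) * (y i * y l)) := by
    intro j; funext y
    rw [hq, pd_quad]
    simp only [add_mul, Finset.sum_add_distrib, zero_mul, Finset.sum_const_zero, add_zero]
  have h3 : ∀ i j, pd (pd H j) i x = qm a b i j + qm a b j i := by
    intro i j
    rw [h1 j, pd_quad]
    simp
  have hMat : (Matrix.of fun i j => pd (pd H j) i x) =
      Matrix.of !![3*b/(16*(a+2)),
          3*b*(Real.sqrt 2*Real.sqrt (a+2)*Real.sqrt (a+4))/(16*((a+2)*(a+4))), 0,
          3*b*(Real.sqrt 2*Real.sqrt a*Real.sqrt (a+2))/(16*(a*(a+2)));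
        3*b*(Real.sqrt 2*Real.sqrt (a+2)*Real.sqrt (a+4))/(16*((a+2)*(a+4))), 3*b/(32*(a+4)),
          3*b*(Real.sqrt 2*Real.sqrt (a+2)*Real.sqrt (a+4))/(16*((a+2)*(a+4))),
          3*b*(Real.sqrt 2*Real.sqrt a*Real.sqrt (a+4))/(16*(a*(a+4)));
        0, 3*b*(Real.sqrt 2*Real.sqrt (a+2)*Real.sqrt (a+4))/(16*((a+2)*(a+4))), 3*b/(16*(a+2)),
          3*b*(Real.sqrt 2*Real.sqrt a*Real.sqrt (a+2))/(16*(a*(a+2)));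
        3*b*(Real.sqrt 2*Real.sqrt a*Real.sqrt (a+2))/(16*(a*(a+2))),
          3*b*(Real.sqrt 2*Real.sqrt a*Real.sqrt (a+4))/(16*(a*(a+4))),
          3*b*(Real.sqrt 2*Real.sqrt a*Real.sqrt (a+2))/(16*(a*(a+2))), 3*b/(32*a)] := by
    ext i j
    rw [Matrix.of_apply, h3 i j]
    fin_cases i <;> fin_cases j <;>
      simp only [qm, of_mat_apply, Matrix.of_apply, Matrix.cons_val', Matrix.cons_val_zero, Matrix.cons_val_one,
        Matrix.head_cons, Matrix.cons_val_two, Matrix.tail_cons, Matrix.cons_val_three,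
        Matrix.empty_val', Matrix.cons_val_fin_one, Matrix.head_fin_const,
        show (⟨0, by omega⟩ : Fin 4) = 0 from rfl, show (⟨1, by omega⟩ : Fin 4) = 1 from rfl,
        show (⟨2, by omega⟩ : Fin 4) = 2 from rfl, show (⟨3, by omega⟩ : Fin 4) = 3 from rfl] <;>
      first
        | exact g1
        | exact g2
        | exact g3
        | (rw [← add_div, div_eq_div_iff (by positivity) (by positivity)]; ring)
        | norm_num
  rw [hMat]
  exact hess_det_ne a b _ _ _ _ ha hb hu2 hs02 hs22 hs42 hup h0p h2p h4p
end

section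
/- On ℝ^{12} with canonical Poisson bracket, the five functions F_1 = p_1²+q_1²+p_5²+q_5², F_2 = p_2²+q_2²+p_4²+q_4², I_3 = p_3²+q_3², I_6 = p_6²+q_6², and G = (p_1q_5 − q_1p_5) − (p_2q_4 − q_2p_4) pairwise Poisson-commute. -/
/-- Canonical Poisson bracket on `ℝ^n × ℝ^n` with coordinates `(q, p)`. -/
noncomputable def pbracket {n : ℕ} (f g : (Fin n → ℝ) × (Fin n → ℝ) → ℝ)
    (x : (Fin n → ℝ) × (Fin n → ℝ)) : ℝ :=
  ∑ j : Fin n,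
    (fderiv ℝ f x (Pi.single j 1, 0) * fderiv ℝ g x (0, Pi.single j 1) -
     fderiv ℝ f x (0, Pi.single j 1) * fderiv ℝ g x (Pi.single j 1, 0))

abbrev EE := (Fin 6 → ℝ) × (Fin 6 → ℝ)

noncomputable def Lq (i : Fin 6) : EE →L[ℝ] ℝ :=
  (ContinuousLinearMap.proj i).comp (ContinuousLinearMap.fst ℝ _ _)
noncomputable def Lp (i : Fin 6) : EE →L[ℝ] ℝ :=
  (ContinuousLinearMap.proj i).comp (ContinuousLinearMap.snd ℝ _ _)

lemma hq (i : Fin 6) (x : EE) : HasFDerivAt (fun y : EE => y.1 i) (Lq i) x :=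
  (Lq i).hasFDerivAt

lemma hp (i : Fin 6) (x : EE) : HasFDerivAt (fun y : EE => y.2 i) (Lp i) x :=
  (Lp i).hasFDerivAt

lemma hq2 (i : Fin 6) (x : EE) :
    HasFDerivAt (fun y : EE => (y.1 i)^2) ((2 * x.1 i) • Lq i) x := by
  simpa [pow_two, two_mul, add_smul, Pi.mul_def] using (hq i x).mul (hq i x)

lemma hp2 (i : Fin 6) (x : EE) :
    HasFDerivAt (fun y : EE => (y.2 i)^2) ((2 * x.2 i) • Lp i) x := by
  simpa [pow_two, two_mul, add_smul, Pi.mul_def] using (hp i x).mul (hp i x)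

lemma dF (a b : Fin 6) (x : EE) (v : EE) :
    fderiv ℝ (fun y : EE => (y.2 a)^2 + (y.1 a)^2 + (y.2 b)^2 + (y.1 b)^2) x v =
      2*x.2 a*v.2 a + 2*x.1 a*v.1 a + 2*x.2 b*v.2 b + 2*x.1 b*v.1 b := by
  have h := (((hp2 a x).add (hq2 a x)).add (hp2 b x)).add (hq2 b x)
  erw [h.fderiv]
  simp [Lq, Lp]

lemma dI (a : Fin 6) (x : EE) (v : EE) :
    fderiv ℝ (fun y : EE => (y.2 a)^2 + (y.1 a)^2) x v =
      2*x.2 a*v.2 a + 2*x.1 a*v.1 a := by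
  have h := (hp2 a x).add (hq2 a x)
  erw [h.fderiv]
  simp [Lq, Lp]

lemma dG (x : EE) (v : EE) :
    fderiv ℝ (fun y : EE => (y.2 0 * y.1 4 - y.1 0 * y.2 4) - (y.2 1 * y.1 3 - y.1 1 * y.2 3)) x v =
      (x.2 0 * v.1 4 + x.1 4 * v.2 0 - (x.1 0 * v.2 4 + x.2 4 * v.1 0))
      - (x.2 1 * v.1 3 + x.1 3 * v.2 1 - (x.1 1 * v.2 3 + x.2 3 * v.1 1)) := by
  have h := (((hp 0 x).mul (hq 4 x)).sub ((hq 0 x).mul (hp 4 x))).sub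
    (((hp 1 x).mul (hq 3 x)).sub ((hq 1 x).mul (hp 3 x)))
  erw [h.fderiv]
  simp [Lq, Lp]

/-- The five first integrals of the six-particle KG normal form pairwise
Poisson-commute on `ℝ¹²`. -/
theorem stmt14
    (F1 F2 I3 I6 G : (Fin 6 → ℝ) × (Fin 6 → ℝ) → ℝ)
    (hF1 : ∀ x, F1 x = (x.2 0) ^ 2 + (x.1 0) ^ 2 + (x.2 4) ^ 2 + (x.1 4) ^ 2)
    (hF2 : ∀ x, F2 x = (x.2 1) ^ 2 + (x.1 1) ^ 2 + (x.2 3) ^ 2 + (x.1 3) ^ 2)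
    (hI3 : ∀ x, I3 x = (x.2 2) ^ 2 + (x.1 2) ^ 2)
    (hI6 : ∀ x, I6 x = (x.2 5) ^ 2 + (x.1 5) ^ 2)
    (hG : ∀ x, G x = (x.2 0 * x.1 4 - x.1 0 * x.2 4) - (x.2 1 * x.1 3 - x.1 1 * x.2 3)) :
    ∀ x, pbracket F1 F2 x = 0 ∧ pbracket F1 I3 x = 0 ∧ pbracket F1 I6 x = 0 ∧
      pbracket F1 G x = 0 ∧ pbracket F2 I3 x = 0 ∧ pbracket F2 I6 x = 0 ∧
      pbracket F2 G x = 0 ∧ pbracket I3 I6 x = 0 ∧ pbracket I3 G x = 0 ∧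
      pbracket I6 G x = 0 := by
  obtain rfl : F1 = _ := funext hF1
  obtain rfl : F2 = _ := funext hF2
  obtain rfl : I3 = _ := funext hI3
  obtain rfl : I6 = _ := funext hI6
  obtain rfl : G = _ := funext hG
  intro x
  refine ⟨?_, ?_, ?_, ?_, ?_, ?_, ?_, ?_, ?_, ?_⟩ <;>
    simp only [pbracket, dF, dI, dG, Fin.sum_univ_six] <;>
    simp (config := { decide := true }) only [Pi.single_apply, Pi.zero_apply, if_true, if_false] <;>
    ring
end
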